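/- Concatenation (stochastic, two nodes): If node i provides the information stochastic service curve ⟨gⁱ, βⁱ⟩, i.e. for all t, x ≥ 0, P( sup_{0≤s≤t} [ (H(Aⁱ) ⊗ [βⁱ]ˣ)(s) − H(Aⁱ*(s)) ] > x ) ≤ gⁱ(x), for i = 1, 2, where A¹* = A² (output of node 1 feeds node 2), then the tandem of the two nodes provides the service curve ⟨g¹ ⊗ g², β¹ ⊗ β²⟩ to the flow: P( sup_{0≤s≤t} [ (H(A¹) ⊗ [β¹ ⊗ β²]ˣ)(s) − H(A²*(s)) ] > x ) ≤ (g¹ ⊗ g²)(x). -/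
import Mathlib


open MeasureTheory Set

/-- The `(min,+)` convolution `(f ⊗ g)(s) = inf_{0 ≤ u ≤ s} (f u + g (s - u))`. -/
noncomputable def minConv (f g : ℝ → ℝ) (s : ℝ) : ℝ :=
  sInf ((fun u => f u + g (s - u)) '' Set.Icc 0 s)

/-- The clipped curve `[β]ˣ(t) = max (β t) x`. -/
def clip (β : ℝ → ℝ) (x : ℝ) : ℝ → ℝ := fun t => max (β t) x

lemma minConv_le {f g : ℝ → ℝ} (hf : ∀ u, 0 ≤ f u) (hg : ∀ u, 0 ≤ g u)
    {s u : ℝ} (hu : u ∈ Set.Icc 0 s) : minConv f g s ≤ f u + g (s - u) :=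
  csInf_le ⟨0, by rintro _ ⟨v, hv, rfl⟩; exact add_nonneg (hf v) (hg _)⟩ ⟨u, hu, rfl⟩

lemma le_minConv {f g : ℝ → ℝ} {s c : ℝ} (hs : 0 ≤ s)
    (h : ∀ u ∈ Set.Icc 0 s, c ≤ f u + g (s - u)) : c ≤ minConv f g s :=
  le_csInf ⟨_, ⟨0, ⟨le_refl 0, hs⟩, rfl⟩⟩ (by rintro _ ⟨u, hu, rfl⟩; exact h u hu)

/-- Concatenation (stochastic, two nodes): `HA1 ω` is the information process of the input
of node 1, `HA1s ω` of its output (which is the input of node 2), and `HA2s ω` of the final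
output. If node `i` provides the service curve `⟨gᵢ, βᵢ⟩`, the tandem provides
`⟨g₁ ⊗ g₂, β₁ ⊗ β₂⟩`. -/
theorem stmt9 {Ω : Type*} [MeasurableSpace Ω] (μ : Measure Ω) [IsProbabilityMeasure μ]
    (HA1 HA1s HA2s : Ω → ℝ → ℝ) (β₁ β₂ g₁ g₂ : ℝ → ℝ)
    (hHA1 : ∀ ω, Monotone (HA1 ω)) (hHA1s : ∀ ω, Monotone (HA1s ω))
    (hHA2s : ∀ ω, Monotone (HA2s ω))
    (hHA1n : ∀ ω s, 0 ≤ HA1 ω s) (hHA1sn : ∀ ω s, 0 ≤ HA1s ω s)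
    (hHA2sn : ∀ ω s, 0 ≤ HA2s ω s)
    (hHA10 : ∀ ω, HA1 ω 0 = 0) (hHA1s0 : ∀ ω, HA1s ω 0 = 0) (hHA2s0 : ∀ ω, HA2s ω 0 = 0)
    (hβ₁ : Monotone β₁) (hβ₂ : Monotone β₂) (hβ₁n : ∀ s, 0 ≤ β₁ s) (hβ₂n : ∀ s, 0 ≤ β₂ s)
    (hg₁0 : ∀ x, 0 ≤ x → 0 ≤ g₁ x) (hg₁dec : ∀ x y, 0 ≤ x → x ≤ y → g₁ y ≤ g₁ x)
    (hg₂0 : ∀ x, 0 ≤ x → 0 ≤ g₂ x) (hg₂dec : ∀ x y, 0 ≤ x → x ≤ y → g₂ y ≤ g₂ x)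
    (hS₁ : ∀ t x : ℝ, 0 ≤ t → 0 ≤ x →
      μ {ω | x < sSup ((fun s => minConv (HA1 ω) (clip β₁ x) s - HA1s ω s) '' Set.Icc 0 t)}
        ≤ ENNReal.ofReal (g₁ x))
    (hS₂ : ∀ t x : ℝ, 0 ≤ t → 0 ≤ x →
      μ {ω | x < sSup ((fun s => minConv (HA1s ω) (clip β₂ x) s - HA2s ω s) '' Set.Icc 0 t)}
        ≤ ENNReal.ofReal (g₂ x)) :
    ∀ t x : ℝ, 0 ≤ t → 0 ≤ x →
      μ {ω | x < sSup ((fun s =>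
          minConv (HA1 ω) (clip (minConv β₁ β₂) x) s - HA2s ω s) '' Set.Icc 0 t)}
        ≤ ENNReal.ofReal (minConv g₁ g₂ x) := by
  intro t x ht hx
  set E := {ω | x < sSup ((fun s =>
      minConv (HA1 ω) (clip (minConv β₁ β₂) x) s - HA2s ω s) '' Set.Icc 0 t)} with hE
  have key : ∀ u ∈ Set.Icc (0:ℝ) x, μ E ≤ ENNReal.ofReal (g₁ u + g₂ (x - u)) := by
    rintro x₁ ⟨hx₁, hx₁x⟩
    set x₂ := x - x₁ with hx₂def
    have hx₂ : 0 ≤ x₂ := by simp [hx₂def]; linarith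
    -- clip nonnegativity
    have hc₁ : ∀ u, 0 ≤ clip β₁ x₁ u := fun u => le_trans (hβ₁n u) (le_max_left _ _)
    have hc₂ : ∀ u, 0 ≤ clip β₂ x₂ u := fun u => le_trans (hβ₂n u) (le_max_left _ _)
    have hc : ∀ u, 0 ≤ clip (minConv β₁ β₂) x u := fun u => le_trans hx (le_max_right _ _)
    set X : Ω → ℝ := fun ω =>
      sSup ((fun s => minConv (HA1 ω) (clip β₁ x₁) s - HA1s ω s) '' Set.Icc 0 t) with hXdef
    set Y : Ω → ℝ := fun ω =>
      sSup ((fun s => minConv (HA1s ω) (clip β₂ x₂) s - HA2s ω s) '' Set.Icc 0 t) with hYdef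
    have hsub : E ⊆ {ω | x₁ < X ω} ∪ {ω | x₂ < Y ω} := by
      intro ω hω
      have bddX : BddAbove ((fun s => minConv (HA1 ω) (clip β₁ x₁) s - HA1s ω s) '' Set.Icc 0 t) := by
        refine ⟨max (β₁ t) x₁, ?_⟩
        rintro _ ⟨v, hv, rfl⟩
        show minConv (HA1 ω) (clip β₁ x₁) v - HA1s ω v ≤ max (β₁ t) x₁
        have h1 : minConv (HA1 ω) (clip β₁ x₁) v ≤ HA1 ω 0 + clip β₁ x₁ (v - 0) :=
          minConv_le (hHA1n ω) hc₁ ⟨le_refl 0, hv.1⟩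
        have h2 : clip β₁ x₁ (v - 0) ≤ max (β₁ t) x₁ := by
          simpa [clip] using max_le_max (hβ₁ (by linarith [hv.2] : v - 0 ≤ t)) (le_refl x₁)
        have := hHA1sn ω v
        simp only [hHA10 ω] at h1
        linarith
      have bddY : BddAbove ((fun s => minConv (HA1s ω) (clip β₂ x₂) s - HA2s ω s) '' Set.Icc 0 t) := by
        refine ⟨max (β₂ t) x₂, ?_⟩
        rintro _ ⟨v, hv, rfl⟩
        show minConv (HA1s ω) (clip β₂ x₂) v - HA2s ω v ≤ max (β₂ t) x₂
        have h1 : minConv (HA1s ω) (clip β₂ x₂) v ≤ HA1s ω 0 + clip β₂ x₂ (v - 0) :=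
          minConv_le (hHA1sn ω) hc₂ ⟨le_refl 0, hv.1⟩
        have h2 : clip β₂ x₂ (v - 0) ≤ max (β₂ t) x₂ := by
          simpa [clip] using max_le_max (hβ₂ (by linarith [hv.2] : v - 0 ≤ t)) (le_refl x₂)
        have := hHA2sn ω v
        simp only [hHA1s0 ω] at h1
        linarith
      have haX : ∀ v ∈ Set.Icc (0:ℝ) t,
          minConv (HA1 ω) (clip β₁ x₁) v ≤ HA1s ω v + X ω := by
        intro v hv
        have h : minConv (HA1 ω) (clip β₁ x₁) v - HA1s ω v ≤ X ω := le_csSup bddX ⟨v, hv, rfl⟩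
        linarith
      have haY : ∀ v ∈ Set.Icc (0:ℝ) t,
          minConv (HA1s ω) (clip β₂ x₂) v ≤ HA2s ω v + Y ω := by
        intro v hv
        have h : minConv (HA1s ω) (clip β₂ x₂) v - HA2s ω v ≤ Y ω := le_csSup bddY ⟨v, hv, rfl⟩
        linarith
      -- pathwise bound
      have path : ∀ s ∈ Set.Icc (0:ℝ) t,
          minConv (HA1 ω) (clip (minConv β₁ β₂) x) s - HA2s ω s ≤ X ω + Y ω := by
        intro s hs
        have h1 : minConv (HA1 ω) (clip (minConv β₁ β₂) x) s
            ≤ minConv (HA1s ω) (clip β₂ x₂) s + X ω := by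
          have h2 : minConv (HA1 ω) (clip (minConv β₁ β₂) x) s - X ω
              ≤ minConv (HA1s ω) (clip β₂ x₂) s := by
            apply le_minConv hs.1
            intro w hw
            have h3 : minConv (HA1 ω) (clip (minConv β₁ β₂) x) s - clip β₂ x₂ (s - w)
                ≤ minConv (HA1 ω) (clip β₁ x₁) w := by
              apply le_minConv hw.1
              intro v hv
              have hvs : v ∈ Set.Icc (0:ℝ) s := ⟨hv.1, le_trans hv.2 hw.2⟩
              have hA : minConv (HA1 ω) (clip (minConv β₁ β₂) x) s
                  ≤ HA1 ω v + clip (minConv β₁ β₂) x (s - v) :=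
                minConv_le (hHA1n ω) hc hvs
              have hconv : minConv β₁ β₂ (s - v) ≤ β₁ (w - v) + β₂ (s - w) := by
                have := minConv_le hβ₁n hβ₂n
                  (s := s - v) (u := w - v) ⟨by linarith [hv.1, hv.2], by linarith [hw.2]⟩
                simpa [show s - v - (w - v) = s - w by ring] using this
              have hB : clip (minConv β₁ β₂) x (s - v)
                  ≤ clip β₁ x₁ (w - v) + clip β₂ x₂ (s - w) := by
                simp only [clip]
                apply max_le
                · exact le_trans hconv (add_le_add (le_max_left _ _) (le_max_left _ _))
                · have : x = x₁ + x₂ := by simp [hx₂def]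
                  rw [this]
                  exact add_le_add (le_max_right _ _) (le_max_right _ _)
              linarith
            have h4 := haX w ⟨hw.1, le_trans hw.2 hs.2⟩
            linarith
          linarith
        have h5 := haY s hs
        linarith
      have hsup : sSup ((fun s =>
          minConv (HA1 ω) (clip (minConv β₁ β₂) x) s - HA2s ω s) '' Set.Icc 0 t)
          ≤ X ω + Y ω := by
        have hne : ((fun s => minConv (HA1 ω) (clip (minConv β₁ β₂) x) s - HA2s ω s) '' Set.Icc 0 t).Nonempty :=
          Set.Nonempty.image _ ⟨0, le_refl 0, ht⟩
        apply csSup_le hne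
        rintro _ ⟨s, hs, rfl⟩
        exact path s hs
      have hωE : x < sSup ((fun s =>
          minConv (HA1 ω) (clip (minConv β₁ β₂) x) s - HA2s ω s) '' Set.Icc 0 t) := hω
      have hxy : x < X ω + Y ω := lt_of_lt_of_le hωE hsup
      rcases lt_or_ge x₁ (X ω) with h | h
      · exact Or.inl h
      · right
        show x₂ < Y ω
        simp only [hx₂def]
        linarith
    calc μ E ≤ μ ({ω | x₁ < X ω} ∪ {ω | x₂ < Y ω}) := measure_mono hsub
      _ ≤ μ {ω | x₁ < X ω} + μ {ω | x₂ < Y ω} := measure_union_le _ _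
      _ ≤ ENNReal.ofReal (g₁ x₁) + ENNReal.ofReal (g₂ x₂) :=
          add_le_add (hS₁ t x₁ ht hx₁) (hS₂ t x₂ ht hx₂)
      _ = ENNReal.ofReal (g₁ x₁ + g₂ (x - x₁)) := by
          rw [← ENNReal.ofReal_add (hg₁0 x₁ hx₁) (hg₂0 x₂ hx₂)]
  have hEtop : μ E ≠ ⊤ := measure_ne_top μ E
  have hnn : 0 ≤ minConv g₁ g₂ x :=
    le_minConv hx (fun u hu => add_nonneg (hg₁0 u hu.1) (hg₂0 _ (by linarith [hu.2])))
  rw [ENNReal.le_ofReal_iff_toReal_le hEtop hnn]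
  show (μ E).toReal ≤ sInf ((fun u => g₁ u + g₂ (x - u)) '' Set.Icc 0 x)
  have hne : ((fun u => g₁ u + g₂ (x - u)) '' Set.Icc 0 x).Nonempty :=
    Set.Nonempty.image _ ⟨0, le_refl 0, hx⟩
  apply le_csInf hne
  rintro _ ⟨u, hu, rfl⟩
  exact ENNReal.toReal_le_of_le_ofReal
    (add_nonneg (hg₁0 u hu.1) (hg₂0 _ (by linarith [hu.2]))) (key u hu)
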